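/- Let n > 0, let w be a word of length j with 0 < j < n whose first letter is a, and let u = b^{n-j} w over the binary alphabet {a,b} (a ≠ b). Then for every word v of length n that has w as a prefix, the correlation c(u,v) equals 0^{n-j} s, where s = c(w,w) is the autocorrelation of w. -/
import Mathlib


/-- The correlation of `(u,v)`: bit `i` is `1` iff the suffix of `u` starting at `i`
equals the prefix of `v` of the same length. -/
def corr {α : Type*} [DecidableEq α] (u v : List α) : List Bool :=
  (List.range u.length).map fun i => decide (u.drop i = v.take (u.length - i))

/-- If `u = b^{n-j} w` with `w` starting with `a ≠ b`, then for any `v` of length `n`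
with prefix `w`, the correlation `c(u,v)` is `0^{n-j}` followed by the autocorrelation
of `w`. -/
theorem stmt11 {α : Type*} [DecidableEq α] (a b : α) (hab : a ≠ b) (n j : ℕ)
    (hj : 0 < j) (hjn : j < n) (w : List α) (hw : w.length = j)
    (hhead : w.head? = some a) (v : List α) (hv : v.length = n) (hpre : w <+: v) :
    corr (List.replicate (n - j) b ++ w) v =
      List.replicate (n - j) false ++ corr w w := by
  set m := n - j with hm
  have hmj : m + j = n := by omega
  have hul : (List.replicate m b ++ w).length = n := by
    simp [hw]; omega
  obtain ⟨t, ht⟩ := hpre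
  have hwa : ∃ w', w = a :: w' := by
    cases w with
    | nil => simp at hhead
    | cons x xs => simp at hhead; exact ⟨xs, by rw [hhead]⟩
  obtain ⟨w', rfl⟩ := hwa
  subst ht
  apply List.ext_getElem
  · simp [corr, hul, hw]; omega
  intro i h1 h2
  simp only [corr, List.length_append, List.length_map, List.length_range,
    List.length_replicate, hw, hul] at h1 h2
  simp only [corr, hul]
  rw [List.getElem_map, List.getElem_range]
  by_cases hi : i < m
  · rw [List.getElem_append_left (by simpa using hi)]
    simp only [List.getElem_replicate]
    rw [decide_eq_false_iff_not]
    intro h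
    have hd : ((List.replicate m b ++ (a :: w')).drop i)[0]'(by simp; omega) =
        (((a :: w' ++ t)).take (n - i))[0]'(by simp; omega) := by
      simp only [h]
    rw [List.getElem_drop] at hd
    rw [List.getElem_take] at hd
    rw [List.getElem_append_left (by simp; omega)] at hd
    rw [List.getElem_replicate] at hd
    simp at hd
    exact hab hd.symm
  · push_neg at hi
    rw [List.getElem_append_right (by simpa using hi)]
    simp only [List.length_replicate]
    have hk : i - m < j := by omega
    simp only [corr, hw]
    rw [List.getElem_map, List.getElem_range]
    have hdrop : (List.replicate m b ++ (a :: w')).drop i = (a :: w').drop (i - m) := by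
      rw [List.drop_append]
      simp [List.drop_replicate, Nat.sub_eq_zero_of_le hi]
    have htake : (a :: w' ++ t).take (n - i) = (a :: w').take (j - (i - m)) := by
      rw [List.take_append]
      have e1 : n - i = j - (i - m) := by omega
      have e2 : j - (i - m) - (w'.length + 1) = 0 := by
        simp only [List.length_cons] at hw; omega
      rw [e1]; simp [e2]
    rw [hdrop, htake]
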